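/- The Beck–Chevalley condition holds for the Kleene realizability doctrine over Rec: let f : A → C and g : B → C be morphisms of Rec, let D := {⟨a,b⟩ : a ∈ A, b ∈ B, f(a) = g(b)} with the projection morphisms q₁ : D → A and q₂ : D → B of Rec (so that D, q₁, q₂ form a pullback of f and g in Rec). Then for every realized predicate P on A, both g*(∃_f P) ⊑_B ∃_{q₂}(q₁* P) and ∃_{q₂}(q₁* P) ⊑_B g*(∃_f P) hold. -/

import Mathlib

open CategoryTheory

namespace RecPaper

/-- Kleene application `{e}(n)`: apply the partial recursive function with Gödel code `e`
to the input `n`. -/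
def kap (e n : ℕ) : Part ℕ :=
  Nat.Partrec.Code.eval (Denumerable.ofNat Nat.Partrec.Code e) n

/-- The type of objects of the category `Rec`: subsets of `ℕ`. -/
def RecCat : Type := Set ℕ

/-- The underlying subset of `ℕ` of an object of `Rec`. -/
def RecCat.carrier (A : RecCat) : Set ℕ := A

/-- View a subset of `ℕ` as an object of `Rec`. -/
def RecCat.ofSet (A : Set ℕ) : RecCat := A

instance : CoeSort RecCat Type := ⟨fun A => {n : ℕ // n ∈ A.carrier}⟩

/-- A function between subsets of `ℕ` is *tracked* if there is a partial recursive
function, defined on the whole domain, whose restriction to the domain is the given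
function. -/
def Tracked {A B : RecCat} (f : A → B) : Prop :=
  ∃ g : ℕ →. ℕ, Nat.Partrec g ∧ ∀ a : A, g a.val = Part.some (f a).val

/-- The category `Rec` of subsets of `ℕ` and restrictions of partial recursive functions. -/
instance : Category RecCat where
  Hom A B := {f : A → B // Tracked f}
  id A := ⟨fun a => a, (fun n => n : ℕ → ℕ), Nat.Partrec.of_primrec Nat.Primrec.id,
    fun _ => rfl⟩
  comp {A B C} f g := ⟨fun a => g.1 (f.1 a), by
    obtain ⟨u, pu, hu⟩ := f.2
    obtain ⟨v, pv, hv⟩ := g.2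
    refine ⟨fun n => u n >>= v, pv.comp pu, fun a => ?_⟩
    show u a.val >>= v = _
    rw [hu a]
    exact (Part.bind_some _ _).trans (hv (f.1 a))⟩
  id_comp _ := rfl
  comp_id _ := rfl
  assoc _ _ _ := rfl

/-- The underlying function of a morphism of `Rec`. -/
def hfun {A B : RecCat} (f : A ⟶ B) : A → B := f.1

/-- The value of a morphism of `Rec` on an element, as a natural number. -/
def happ {A B : RecCat} (f : A ⟶ B) (a : A) : ℕ := (hfun f a).val


/-- The realizability order `P ⊑_A Q` between realized predicates on `A`. -/
def rle (A : Set ℕ) (P Q : ℕ → Set ℕ) : Prop :=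
  ∃ e : ℕ, ∀ a ∈ A, ∀ n ∈ P a, ∃ v ∈ Q a, kap e (Nat.pair a n) = Part.some v

/-- Reindexing of a realized predicate along a morphism of `Rec`. -/
def fstar {A B : RecCat} (f : A ⟶ B) (Q : ℕ → Set ℕ) : ℕ → Set ℕ :=
  fun a => {n | ∃ h : a ∈ A.carrier, n ∈ Q (happ f ⟨a, h⟩)}

/-- The left adjoint `∃_f P`. -/
def rexists {A B : RecCat} (f : A ⟶ B) (P : ℕ → Set ℕ) : ℕ → Set ℕ :=
  fun b => {m | ∃ a : A, happ f a = b ∧ ∃ n ∈ P a.val, m = Nat.pair a.val n}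

/-- The pullback set `D = {⟨a,b⟩ : a ∈ A, b ∈ B, f(a) = g(b)}`. -/
def pbSet {A B C : RecCat} (f : A ⟶ C) (g : B ⟶ C) : Set ℕ :=
  {n | ∃ (a : A) (b : B), n = Nat.pair a.val b.val ∧ happ f a = happ g b}

theorem kap_total {r : ℕ → ℕ} (hr : Nat.Primrec r) :
    ∃ e : ℕ, ∀ n, kap e n = Part.some (r n) := by
  obtain ⟨c, hc⟩ := Nat.Partrec.Code.exists_code.1 (Nat.Partrec.of_primrec hr)
  refine ⟨Encodable.encode c, fun n => ?_⟩
  simp [kap, hc]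

theorem hom_ext {A B : RecCat} {f g : A ⟶ B} (h : ∀ a, f.1 a = g.1 a) : f = g :=
  Subtype.ext (funext h)

/-- The Beck–Chevalley condition for the Kleene realizability doctrine over `Rec`:
for the canonical pullback `D` of `f` and `g` with projections `q₁`, `q₂`, both
`g*(∃_f P) ⊑_B ∃_{q₂}(q₁* P)` and `∃_{q₂}(q₁* P) ⊑_B g*(∃_f P)`. -/
theorem rec_beck_chevalley :
    ∀ (A B C : RecCat) (f : A ⟶ C) (g : B ⟶ C),
      ∃ (q₁ : RecCat.ofSet (pbSet f g) ⟶ A) (q₂ : RecCat.ofSet (pbSet f g) ⟶ B),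
        (∀ x, happ q₁ x = (Nat.unpair x.val).1) ∧
        (∀ x, happ q₂ x = (Nat.unpair x.val).2) ∧
        IsPullback q₁ q₂ f g ∧
        ∀ P : ℕ → Set ℕ,
          rle B.carrier (fstar g (rexists f P)) (rexists q₂ (fstar q₁ P)) ∧
          rle B.carrier (rexists q₂ (fstar q₁ P)) (fstar g (rexists f P)) := by
  intro A B C f g
  -- the two projections
  have mem1 : ∀ x : (RecCat.ofSet (pbSet f g) : Type),
      (Nat.unpair x.val).1 ∈ A.carrier ∧ (Nat.unpair x.val).2 ∈ B.carrier ∧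
      ∃ (ha : (Nat.unpair x.val).1 ∈ A.carrier) (hb : (Nat.unpair x.val).2 ∈ B.carrier),
        happ f ⟨_, ha⟩ = happ g ⟨_, hb⟩ := by
    rintro ⟨x, a, b, rfl, hfg⟩
    simp only [Nat.unpair_pair]
    exact ⟨a.2, b.2, a.2, b.2, hfg⟩
  let q1 : RecCat.ofSet (pbSet f g) ⟶ A :=
    ⟨fun x => ⟨(Nat.unpair x.val).1, (mem1 x).1⟩,
      (fun n => (Nat.unpair n).1 : ℕ → ℕ), Nat.Partrec.of_primrec Nat.Primrec.left,
      fun _ => rfl⟩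
  let q2 : RecCat.ofSet (pbSet f g) ⟶ B :=
    ⟨fun x => ⟨(Nat.unpair x.val).2, (mem1 x).2.1⟩,
      (fun n => (Nat.unpair n).2 : ℕ → ℕ), Nat.Partrec.of_primrec Nat.Primrec.right,
      fun _ => rfl⟩
  refine ⟨q1, q2, fun _ => rfl, fun _ => rfl, ?_, ?_⟩
  · -- the pullback property
    have comm : q1 ≫ f = q2 ≫ g := by
      apply hom_ext
      intro x
      obtain ⟨_, _, ha, hb, hab⟩ := mem1 x
      exact Subtype.ext hab
    refine IsPullback.of_isLimit' ⟨comm⟩ (Limits.PullbackCone.IsLimit.mk _ ?_ ?_ ?_ ?_)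
    · -- lift
      intro s
      refine ⟨fun w => ⟨Nat.pair (s.fst.1 w).val (s.snd.1 w).val,
        s.fst.1 w, s.snd.1 w, rfl, ?_⟩, ?_⟩
      · have := congrArg (fun (h : s.pt ⟶ C) => (h.1 w).val) s.condition
        exact this
      · obtain ⟨u, pu, hu⟩ := s.fst.2
        obtain ⟨v, pv, hv⟩ := s.snd.2
        refine ⟨fun n => Nat.pair <$> u n <*> v n, Nat.Partrec.pair pu pv, fun w => ?_⟩
        simp [hu w, hv w, Seq.seq]
    · intro s; apply hom_ext; intro w
      refine Subtype.ext ?_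
      show (Nat.unpair (Nat.pair (s.fst.1 w).val (s.snd.1 w).val)).1 = (s.fst.1 w).val
      simp
    · intro s; apply hom_ext; intro w
      refine Subtype.ext ?_
      show (Nat.unpair (Nat.pair (s.fst.1 w).val (s.snd.1 w).val)).2 = (s.snd.1 w).val
      simp
    · intro s m h1 h2
      apply hom_ext; intro w
      apply Subtype.ext
      have e1 : ((m.1 w).val.unpair).1 = (s.fst.1 w).val :=
        congrArg (fun (h : s.pt ⟶ A) => (h.1 w).val) h1
      have e2 : ((m.1 w).val.unpair).2 = (s.snd.1 w).val :=
        congrArg (fun (h : s.pt ⟶ B) => (h.1 w).val) h2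
      simp only
      rw [← e1, ← e2, Nat.pair_unpair]
  · -- the Beck–Chevalley inequalities
    intro P
    constructor
    · -- g*(∃_f P) ⊑ ∃_{q₂}(q₁* P)
      obtain ⟨e, he⟩ := kap_total (r := fun x =>
        Nat.pair (Nat.pair ((Nat.unpair (Nat.unpair x).2).1) (Nat.unpair x).1)
          ((Nat.unpair (Nat.unpair x).2).2))
        ((Nat.Primrec.left.comp Nat.Primrec.right).pair Nat.Primrec.left |>.pair
          (Nat.Primrec.right.comp Nat.Primrec.right))
      refine ⟨e, fun b hb m hm => ?_⟩
      obtain ⟨hb', a, hfa, n, hn, rfl⟩ := hm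
      have hmem : Nat.pair a.val b ∈ pbSet f g := ⟨a, ⟨b, hb'⟩, rfl, hfa⟩
      refine ⟨Nat.pair (Nat.pair a.val b) n, ⟨⟨Nat.pair a.val b, hmem⟩, ?_, n, ?_, rfl⟩, ?_⟩
      · show ((Nat.pair a.val b).unpair).2 = b; simp
      · refine ⟨hmem, ?_⟩
        show n ∈ P ((Nat.unpair (Nat.pair a.val b)).1)
        simpa using hn
      · rw [he]; simp
    · -- ∃_{q₂}(q₁* P) ⊑ g*(∃_f P)
      obtain ⟨e, he⟩ := kap_total (r := fun x =>
        Nat.pair ((Nat.unpair (Nat.unpair (Nat.unpair x).2).1).1)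
          ((Nat.unpair (Nat.unpair x).2).2))
        ((Nat.Primrec.left.comp (Nat.Primrec.left.comp Nat.Primrec.right)).pair
          (Nat.Primrec.right.comp Nat.Primrec.right))
      refine ⟨e, fun b hb m hm => ?_⟩
      obtain ⟨d, hq2, n, hn, rfl⟩ := hm
      obtain ⟨a, b', hd, hfg⟩ := d.2
      have hb'b : b'.val = b := by
        have : ((d.val).unpair).2 = b := hq2
        rw [hd] at this; simpa using this
      have hd1 : ((d.val).unpair).1 = a.val := by rw [hd]; simp
      obtain ⟨hdm, hnP⟩ := hn
      refine ⟨Nat.pair a.val n, ⟨hb, a, ?_, n, ?_, rfl⟩, ?_⟩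
      · rw [hfg]; congr 1; exact Subtype.ext hb'b
      · -- n ∈ P a.val
        have : happ q1 ⟨d.val, hdm⟩ = a.val := hd1
        rwa [this] at hnP
      · rw [he]; simp [hd1]

end RecPaper
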